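/- Let X be an ultra-log-concave random variable taking values in the nonnegative integers whose mean λ = E[X] is a (finite) nonnegative integer. Then P(X = λ) ≥ e^{-λ} λ^λ / λ!, i.e., P(X = E X) ≥ P(Z = E X) where Z is a Poisson random variable with parameter λ = E X (with the convention 0^0 = 1). -/

import Mathlib

open MeasureTheory
open scoped Nat


/-- Core sequence lemma. -/
theorem ulc_core (p : ℕ → ℝ) (hp : ∀ n, 0 ≤ p n) (lam : ℕ) (hlam : 1 ≤ lam)
    (hsum : HasSum p 1) (hmean : HasSum (fun n : ℕ => (n : ℝ) * p n) (lam : ℝ))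
    (hsupp : ∀ i j k : ℕ, i ≤ j → j ≤ k → 0 < p i → 0 < p k → 0 < p j)
    (hulc : ∀ n : ℕ, 1 ≤ n →
      ((n + 1).factorial : ℝ) * p (n + 1) * (((n - 1).factorial : ℝ) * p (n - 1)) ≤
        ((n.factorial : ℝ) * p n) ^ 2) :
    Real.exp (-(lam : ℝ)) * (lam : ℝ) ^ lam / (lam.factorial : ℝ) ≤ p lam := by
  classical
  -- first: p lam > 0
  have hplam : 0 < p lam := by
    by_contra h
    push_neg at h
    have hplam0 : p lam = 0 := le_antisymm h (hp lam)
    -- either all mass below lam or all above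
    by_cases hlow : ∃ i ≤ lam, 0 < p i
    · -- then no mass at or above lam+1? otherwise p lam > 0
      obtain ⟨i, hi, hpi⟩ := hlow
      have hhigh : ∀ k, lam ≤ k → p k = 0 := by
        intro k hk
        by_contra hk0
        have hpk : 0 < p k := lt_of_le_of_ne (hp k) (Ne.symm hk0)
        have := hsupp i lam k hi hk hpi hpk
        rw [hplam0] at this
        exact lt_irrefl 0 this
      -- mean ≤ lam - 1
      have hle : ∀ n : ℕ, (n : ℝ) * p n ≤ ((lam : ℝ) - 1) * p n := by
        intro n
        rcases lt_or_ge n lam with hn | hn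
        · have : (n : ℝ) ≤ (lam : ℝ) - 1 := by
            have : (n : ℝ) + 1 ≤ lam := by exact_mod_cast hn
            linarith
          exact mul_le_mul_of_nonneg_right this (hp n)
        · rw [hhigh n hn]; simp
      have := hasSum_le hle hmean (hsum.mul_left ((lam : ℝ) - 1))
      simp at this
      linarith
    · push_neg at hlow
      have hlow' : ∀ i ≤ lam, p i = 0 := fun i hi => le_antisymm (hlow i hi) (hp i)
      have hle : ∀ n : ℕ, ((lam : ℝ) + 1) * p n ≤ (n : ℝ) * p n := by
        intro n
        rcases le_or_gt n lam with hn | hn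
        · rw [hlow' n hn]; simp
        · have : (lam : ℝ) + 1 ≤ (n : ℝ) := by exact_mod_cast hn
          exact mul_le_mul_of_nonneg_right this (hp n)
      have := hasSum_le hle (hsum.mul_left ((lam : ℝ) + 1)) hmean
      simp at this
      linarith
  -- case: no mass above lam
  by_cases hq1 : p (lam + 1) = 0
  · -- then X = lam a.s., p lam = 1
    have hhigh : ∀ n, lam < n → p n = 0 := by
      intro n hn
      by_contra h0
      have hpn : 0 < p n := lt_of_le_of_ne (hp n) (Ne.symm h0)
      have := hsupp lam (lam + 1) n (Nat.le_succ lam) hn hplam hpn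
      rw [hq1] at this; exact lt_irrefl 0 this
    have hz : HasSum (fun n : ℕ => ((lam : ℝ) - n) * p n) 0 := by
      have h1 := (hsum.mul_left (lam : ℝ)).sub hmean
      simp only [mul_one] at h1
      have : (fun n : ℕ => ((lam : ℝ) - n) * p n)
          = fun n : ℕ => (lam : ℝ) * p n - (n : ℝ) * p n := by
        funext n; ring
      rw [this]
      simpa using h1
    have hzero : ∀ n : ℕ, ((lam : ℝ) - n) * p n = 0 := by
      have hnn : ∀ n : ℕ, 0 ≤ ((lam : ℝ) - n) * p n := by
        intro n
        rcases le_or_gt n lam with hn | hn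
        · have : (n : ℝ) ≤ (lam : ℝ) := by exact_mod_cast hn
          exact mul_nonneg (by linarith) (hp n)
        · rw [hhigh n hn]; simp
      have := (hasSum_zero_iff_of_nonneg hnn).1 hz
      intro n; exact congrFun this n
    have hlow0 : ∀ n, n ≠ lam → p n = 0 := by
      intro n hn
      rcases lt_or_gt_of_ne hn with h | h
      · have := hzero n
        have hne : ((lam : ℝ) - n) ≠ 0 := by
          have : (n : ℝ) < (lam : ℝ) := by exact_mod_cast h
          intro hc; linarith
        exact (mul_eq_zero.1 this).resolve_left hne
      · exact hhigh n h
    have hpl1 : p lam = 1 := by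
      have h2 : HasSum (fun n : ℕ => if n = lam then p lam else 0) (p lam) :=
        hasSum_ite_eq lam (p lam)
      have heq : (fun n : ℕ => if n = lam then p lam else 0) = p := by
        funext n
        by_cases hn : n = lam
        · rw [hn]; simp
        · simp [hn, hlow0 n hn]
      rw [heq] at h2
      exact h2.unique hsum
    rw [hpl1, mul_div_assoc]
    calc Real.exp (-(lam : ℝ)) * ((lam : ℝ) ^ lam / (lam.factorial : ℝ))
        ≤ Real.exp (-(lam : ℝ)) * Real.exp (lam : ℝ) := by
          apply mul_le_mul_of_nonneg_left _ (Real.exp_nonneg _)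
          exact Real.pow_div_factorial_le_exp (x := (lam:ℝ)) (by positivity) lam
      _ = 1 := by rw [← Real.exp_add]; simp
  · -- main case : p (lam+1) > 0
    have hq1' : 0 < p (lam + 1) := lt_of_le_of_ne (hp _) (Ne.symm hq1)
    set q : ℕ → ℝ := fun n => (n.factorial : ℝ) * p n with hqdef
    have hqnn : ∀ n, 0 ≤ q n := fun n => mul_nonneg (by positivity) (hp n)
    have hqlam : 0 < q lam := mul_pos (by positivity) hplam
    have hqlam1 : 0 < q (lam + 1) := mul_pos (by positivity) hq1'
    set ν : ℝ := q (lam + 1) / q lam with hnudef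
    have hν : 0 < ν := div_pos hqlam1 hqlam
    have hνq : ν * q lam = q (lam + 1) := by
      rw [hnudef]; field_simp
    have hulc' : ∀ n : ℕ, 1 ≤ n → q (n + 1) * q (n - 1) ≤ q n ^ 2 := by
      intro n hn; exact hulc n hn
    have hqz : ∀ n, p n = 0 → q n = 0 := by
      intro n hn; rw [hqdef]; simp [hn]
    have hqpos : ∀ n, 0 < p n → 0 < q n := by
      intro n hn; exact mul_pos (by positivity) hn
    have hpq : ∀ n, 0 < q n → 0 < p n := by
      intro n hn
      rcases lt_or_ge 0 (p n) with h | h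
      · exact h
      · exfalso; have : p n = 0 := le_antisymm h (hp n)
        rw [hqz n this] at hn; exact lt_irrefl 0 hn
    -- downward: ratio ≥ ν below lam
    have down : ∀ j, j ≤ lam → ν * q (lam - j) ≤ q (lam - j + 1) := by
      intro j
      induction j with
      | zero =>
        intro _
        simpa using le_of_eq hνq
      | succ j ih =>
        intro hj
        have hj' : j ≤ lam := le_of_lt (Nat.lt_of_succ_le hj)
        have ihj := ih hj'
        have hn1 : 1 ≤ lam - j := by omega
        have e1 : lam - (j + 1) = lam - j - 1 := by omega
        have e2 : lam - j - 1 + 1 = lam - j := by omega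
        rw [e1, e2]
        rcases lt_or_ge 0 (q (lam - j)) with hqn | hqn
        · have hu := hulc' (lam - j) hn1
          have h1 : ν * q (lam - j) * q (lam - j - 1) ≤ q (lam - j + 1) * q (lam - j - 1) :=
            mul_le_mul_of_nonneg_right ihj (hqnn _)
          have h2 : ν * q (lam - j) * q (lam - j - 1) ≤ q (lam - j) ^ 2 := le_trans h1 hu
          have h3 : ν * q (lam - j - 1) * q (lam - j) ≤ q (lam - j) * q (lam - j) := by
            nlinarith
          exact le_of_mul_le_mul_right h3 hqn
        · have hq0 : q (lam - j) = 0 := le_antisymm hqn (hqnn _)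
          have hp0 : p (lam - j) = 0 := by
            by_contra h
            have := hqpos (lam - j) (lt_of_le_of_ne (hp _) (Ne.symm h))
            rw [hq0] at this; exact lt_irrefl 0 this
          have hpm : p (lam - j - 1) = 0 := by
            by_contra h
            have hpm' : 0 < p (lam - j - 1) := lt_of_le_of_ne (hp _) (Ne.symm h)
            have := hsupp (lam - j - 1) (lam - j) lam (by omega) (by omega) hpm' hplam
            rw [hp0] at this; exact lt_irrefl 0 this
          rw [hqz _ hpm]
          simpa [hq0] using hqnn (lam - j)
    have downpow : ∀ j, j ≤ lam → q (lam - j) * ν ^ j ≤ q lam := by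
      intro j
      induction j with
      | zero => intro _; simp
      | succ j ih =>
        intro hj
        have hj' : j ≤ lam := le_of_lt (Nat.lt_of_succ_le hj)
        have e2 : lam - (j + 1) + 1 = lam - j := by omega
        have hd := down (j + 1) hj
        rw [e2] at hd
        calc q (lam - (j + 1)) * ν ^ (j + 1)
            = ν * q (lam - (j + 1)) * ν ^ j := by ring
          _ ≤ q (lam - j) * ν ^ j :=
              mul_le_mul_of_nonneg_right hd (by positivity)
          _ ≤ q lam := ih hj'
    -- upward: ratio ≤ ν above lam
    have up : ∀ j : ℕ, q (lam + 1 + j) ≤ ν * q (lam + j) := by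
      intro j
      induction j with
      | zero => simpa using le_of_eq hνq.symm
      | succ j ih =>
        have hn1 : 1 ≤ lam + j + 1 := by omega
        have hu := hulc' (lam + j + 1) hn1
        have e1 : lam + j + 1 - 1 = lam + j := by omega
        rw [e1] at hu
        have e2 : lam + 1 + (j + 1) = lam + j + 1 + 1 := by omega
        have e3 : lam + (j + 1) = lam + j + 1 := by omega
        rw [e2, e3]
        rcases lt_or_ge 0 (q (lam + j + 1)) with hqn | hqn
        · have hpn : 0 < p (lam + j + 1) := hpq _ hqn
          have hpmid : 0 < p (lam + j) :=
            hsupp lam (lam + j) (lam + j + 1) (by omega) (by omega) hplam hpn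
          have hqmid : 0 < q (lam + j) := hqpos _ hpmid
          have ihj : q (lam + j + 1) ≤ ν * q (lam + j) := by
            have e4 : lam + 1 + j = lam + j + 1 := by omega
            rw [e4] at ih; exact ih
          have h2 : q (lam + j + 1 + 1) * q (lam + j) ≤ q (lam + j + 1) * (ν * q (lam + j)) := by
            nlinarith
          have h3 : q (lam + j + 1 + 1) * q (lam + j) ≤ ν * q (lam + j + 1) * q (lam + j) := by
            nlinarith
          exact le_of_mul_le_mul_right h3 hqmid
        · have hq0 : q (lam + j + 1) = 0 := le_antisymm hqn (hqnn _)
          have hnext : p (lam + j + 1 + 1) = 0 := by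
            by_contra h
            have hpn : 0 < p (lam + j + 1 + 1) := lt_of_le_of_ne (hp _) (Ne.symm h)
            have := hsupp lam (lam + j + 1) (lam + j + 1 + 1) (by omega) (by omega) hplam hpn
            have h0 : p (lam + j + 1) = 0 := by
              by_contra hcc
              have := hqpos (lam + j + 1) (lt_of_le_of_ne (hp _) (Ne.symm hcc))
              rw [hq0] at this; exact lt_irrefl 0 this
            rw [h0] at this; exact lt_irrefl 0 this
          rw [hqz _ hnext, hq0]
          simp
    have uppow : ∀ j : ℕ, q (lam + j) ≤ q lam * ν ^ j := by
      intro j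
      induction j with
      | zero => simp
      | succ j ih =>
        have hu := up j
        have e1 : lam + 1 + j = lam + (j + 1) := by omega
        rw [e1] at hu
        calc q (lam + (j + 1)) ≤ ν * q (lam + j) := hu
          _ ≤ ν * (q lam * ν ^ j) := mul_le_mul_of_nonneg_left ih (le_of_lt hν)
          _ = q lam * ν ^ (j + 1) := by ring
    -- unified bound
    have unified : ∀ n : ℕ, q n * ν ^ lam ≤ q lam * ν ^ n := by
      intro n
      rcases le_or_gt n lam with hn | hn
      · have hj := downpow (lam - n) (by omega)
        have e1 : lam - (lam - n) = n := by omega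
        rw [e1] at hj
        have h2 : q n * ν ^ (lam - n) * ν ^ n ≤ q lam * ν ^ n :=
          mul_le_mul_of_nonneg_right hj (by positivity)
        have epow : ν ^ (lam - n) * ν ^ n = ν ^ lam := by
          rw [← pow_add]; congr 1; omega
        calc q n * ν ^ lam = q n * ν ^ (lam - n) * ν ^ n := by rw [← epow]; ring
          _ ≤ q lam * ν ^ n := h2
      · have hj := uppow (n - lam)
        have e1 : lam + (n - lam) = n := by omega
        rw [e1] at hj
        have h2 : q n * ν ^ lam ≤ q lam * ν ^ (n - lam) * ν ^ lam :=
          mul_le_mul_of_nonneg_right hj (by positivity)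
        have epow : ν ^ (n - lam) * ν ^ lam = ν ^ n := by
          rw [← pow_add]; congr 1; omega
        calc q n * ν ^ lam ≤ q lam * ν ^ (n - lam) * ν ^ lam := h2
          _ = q lam * ν ^ n := by rw [← epow]; ring
    -- Chernoff-style pointwise bound
    set β : ℝ := (lam : ℝ) / ν with hbdef
    have hβ : 0 < β := div_pos (by exact_mod_cast hlam) hν
    set θ : ℝ := Real.log β with hθdef
    have hexpθ : Real.exp θ = β := Real.exp_log hβ
    have hνβ : ν * β = (lam : ℝ) := by
      rw [hbdef]; field_simp
    have mb : ∀ n : ℕ, p n * (1 + θ * ((n : ℝ) - lam)) ≤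
        (q lam / (lam : ℝ) ^ lam) * ((lam : ℝ) ^ n / (n.factorial : ℝ)) := by
      intro n
      have hfac : (0 : ℝ) < (n.factorial : ℝ) := by positivity
      have step1 : p n * (1 + θ * ((n : ℝ) - lam)) ≤ p n * Real.exp (θ * ((n : ℝ) - lam)) := by
        have h1 : 1 + θ * ((n : ℝ) - lam) ≤ Real.exp (θ * ((n : ℝ) - lam)) := by
          have := Real.add_one_le_exp (θ * ((n : ℝ) - lam))
          linarith
        exact mul_le_mul_of_nonneg_left h1 (hp n)
      have step2 : Real.exp (θ * ((n : ℝ) - lam)) = β ^ n / β ^ lam := by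
        rw [mul_sub, Real.exp_sub, mul_comm θ ((n : ℝ)), mul_comm θ ((lam : ℝ)),
          Real.exp_nat_mul, Real.exp_nat_mul, hexpθ]
      have hν' : ν ≠ 0 := ne_of_gt hν
      have hβ' : β ≠ 0 := ne_of_gt hβ
      have hβn : ∀ m : ℕ, ν ^ m * β ^ m = (lam : ℝ) ^ m := by
        intro m; rw [← mul_pow, hνβ]
      have step3 : p n * (β ^ n / β ^ lam) ≤
          (q lam * ν ^ n / (ν ^ lam * (n.factorial : ℝ))) * (β ^ n / β ^ lam) := by
        apply mul_le_mul_of_nonneg_right _ (by positivity)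
        rw [le_div_iff₀ (by positivity)]
        have hu := unified n
        calc p n * (ν ^ lam * (n.factorial : ℝ)) = q n * ν ^ lam := by
              simp only [hqdef]; ring
          _ ≤ q lam * ν ^ n := hu
      have req : (q lam * ν ^ n / (ν ^ lam * (n.factorial : ℝ))) * (β ^ n / β ^ lam)
          = (q lam / (lam : ℝ) ^ lam) * ((lam : ℝ) ^ n / (n.factorial : ℝ)) := by
        have e : (q lam * ν ^ n / (ν ^ lam * (n.factorial : ℝ))) * (β ^ n / β ^ lam)
            = (q lam * (ν ^ n * β ^ n)) / ((ν ^ lam * β ^ lam) * (n.factorial : ℝ)) := by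
          field_simp
        rw [e, hβn n, hβn lam]
        ring
      calc p n * (1 + θ * ((n : ℝ) - lam))
          ≤ p n * Real.exp (θ * ((n : ℝ) - lam)) := step1
        _ = p n * (β ^ n / β ^ lam) := by rw [step2]
        _ ≤ (q lam * ν ^ n / (ν ^ lam * (n.factorial : ℝ))) * (β ^ n / β ^ lam) := step3
        _ = (q lam / (lam : ℝ) ^ lam) * ((lam : ℝ) ^ n / (n.factorial : ℝ)) := req
    -- sum both sides
    have hL : HasSum (fun n : ℕ => p n * (1 + θ * ((n : ℝ) - lam))) 1 := by
      have h1 := hsum.add ((hmean.mul_left θ).sub (hsum.mul_left (θ * (lam : ℝ))))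
      simp only [mul_one] at h1
      have he : (fun n : ℕ => p n + (θ * ((n : ℝ) * p n) - θ * (lam : ℝ) * p n))
          = fun n : ℕ => p n * (1 + θ * ((n : ℝ) - lam)) := by
        funext n; ring
      rw [he] at h1
      simpa using h1
    have hR : HasSum
        (fun n : ℕ => (q lam / (lam : ℝ) ^ lam) * ((lam : ℝ) ^ n / (n.factorial : ℝ)))
        ((q lam / (lam : ℝ) ^ lam) * Real.exp (lam : ℝ)) := by
      have h1 : HasSum (fun n : ℕ => ((lam : ℝ)) ^ n / (n.factorial : ℝ))
          (Real.exp ((lam : ℝ))) := by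
        rw [Real.exp_eq_exp_ℝ]
        exact NormedSpace.expSeries_div_hasSum_exp ((lam : ℝ))
      exact h1.mul_left _
    have hfin : (1 : ℝ) ≤ (q lam / (lam : ℝ) ^ lam) * Real.exp (lam : ℝ) :=
      hasSum_le mb hL hR
    have hpow : (0 : ℝ) < (lam : ℝ) ^ lam := by
      have : (0:ℝ) < (lam:ℝ) := by exact_mod_cast hlam
      positivity
    have hfac : (0 : ℝ) < (lam.factorial : ℝ) := by positivity
    have hqle : (lam : ℝ) ^ lam ≤ q lam * Real.exp (lam : ℝ) := by
      rw [div_mul_eq_mul_div, le_div_iff₀ hpow] at hfin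
      linarith
    have hkey : Real.exp (-(lam : ℝ)) * (lam : ℝ) ^ lam ≤ q lam := by
      have h2 := mul_le_mul_of_nonneg_left hqle (Real.exp_pos (-(lam : ℝ))).le
      have h3 : Real.exp (-(lam : ℝ)) * Real.exp ((lam : ℝ)) = 1 := by
        rw [← Real.exp_add]; simp
      calc Real.exp (-(lam : ℝ)) * (lam : ℝ) ^ lam
          ≤ Real.exp (-(lam : ℝ)) * (q lam * Real.exp ((lam : ℝ))) := h2
        _ = q lam * (Real.exp (-(lam : ℝ)) * Real.exp ((lam : ℝ))) := by ring
        _ = q lam := by rw [h3, mul_one]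
    rw [div_le_iff₀ hfac]
    calc Real.exp (-(lam : ℝ)) * (lam : ℝ) ^ lam ≤ q lam := hkey
      _ = p lam * (lam.factorial : ℝ) := by simp only [hqdef]; ring

/-- Translation of measure-theoretic data to sums. -/
theorem ulc_sums {Ω : Type*} [MeasureSpace Ω] [IsProbabilityMeasure (volume : Measure Ω)]
    (X : Ω → ℕ) (hX : Measurable X)
    (μ : ℕ → ℝ) (hμ : ∀ n, μ n = ((volume : Measure Ω) (X ⁻¹' {n})).toReal)
    (hint : Integrable (fun ω => (X ω : ℝ)) (volume : Measure Ω))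
    (lam : ℕ) (hmean : ∫ ω, (X ω : ℝ) ∂(volume : Measure Ω) = (lam : ℝ)) :
    HasSum μ 1 ∧ HasSum (fun n : ℕ => (n : ℝ) * μ n) (lam : ℝ) := by
  classical
  set m : ℕ → ENNReal := fun n => (volume : Measure Ω) (X ⁻¹' {n}) with hmdef
  have hmeas : ∀ n : ℕ, MeasurableSet (X ⁻¹' {n} : Set Ω) :=
    fun n => hX (measurableSet_singleton n)
  have hne : ∀ n : ℕ, m n ≠ ⊤ := fun n => measure_ne_top _ _
  have hdisj : Pairwise (Function.onFun Disjoint fun n : ℕ => (X ⁻¹' {n} : Set Ω)) := by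
    intro a b hab
    refine Set.disjoint_left.2 ?_
    intro ω ha hb
    simp only [Set.mem_preimage, Set.mem_singleton_iff] at ha hb
    exact hab (ha ▸ hb ▸ rfl)
  have hcover : (⋃ n : ℕ, X ⁻¹' {n} : Set Ω) = Set.univ := by
    ext ω; simp
  have htot : ∑' n, m n = 1 := by
    rw [hmdef]
    simp only
    rw [← measure_iUnion hdisj hmeas, hcover, measure_univ]
  have hsum1 : HasSum μ 1 := by
    have hs : Summable fun n => (m n).toReal :=
      ENNReal.summable_toReal (by rw [htot]; exact ENNReal.one_ne_top)
    have ht : ∑' n, (m n).toReal = 1 := by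
      rw [← ENNReal.tsum_toReal_eq hne, htot, ENNReal.toReal_one]
    have heq : (fun n => (m n).toReal) = μ := by
      funext n; rw [hμ n]
    rw [heq] at hs ht
    exact ht ▸ hs.hasSum
  refine ⟨hsum1, ?_⟩
  -- mean
  have hmap : ∀ n : ℕ, (Measure.map X (volume : Measure Ω)) {n} = m n := by
    intro n
    rw [Measure.map_apply hX (measurableSet_singleton n)]
  have hlint : ∫⁻ ω, (X ω : ENNReal) ∂(volume : Measure Ω) = ∑' n : ℕ, (n : ENNReal) * m n := by
    rw [← lintegral_map (f := fun n : ℕ => (n : ENNReal)) (measurable_from_nat) hX]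
    rw [lintegral_countable' (fun n : ℕ => (n : ENNReal))]
    congr 1
    funext n
    rw [hmap n]
  have hofReal : (fun ω => ENNReal.ofReal ((X ω : ℝ))) = fun ω => ((X ω : ℕ) : ENNReal) := by
    funext ω; simp
  have hint' : ∫ ω, (X ω : ℝ) ∂(volume : Measure Ω)
      = (∫⁻ ω, (X ω : ENNReal) ∂(volume : Measure Ω)).toReal := by
    rw [integral_eq_lintegral_of_nonneg_ae (Filter.Eventually.of_forall fun ω => by positivity)
      hint.aestronglyMeasurable]
    rw [hofReal]
  have hfin : ∑' n : ℕ, (n : ENNReal) * m n ≠ ⊤ := by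
    rw [← hlint]
    have h1 := hint.hasFiniteIntegral
    rw [hasFiniteIntegral_iff_norm] at h1
    have heq2 : (fun ω => ENNReal.ofReal ‖(X ω : ℝ)‖) = fun ω => ((X ω : ℕ) : ENNReal) := by
      funext ω
      rw [Real.norm_eq_abs, abs_of_nonneg (by positivity)]
      simp
    rw [heq2] at h1
    exact ne_of_lt h1
  have hterm : ∀ n : ℕ, (n : ENNReal) * m n ≠ ⊤ :=
    fun n => ENNReal.mul_ne_top (ENNReal.natCast_ne_top n) (hne n)
  have hs2 : Summable fun n : ℕ => ((n : ENNReal) * m n).toReal := ENNReal.summable_toReal hfin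
  have ht2 : ∑' n : ℕ, ((n : ENNReal) * m n).toReal = (lam : ℝ) := by
    rw [← ENNReal.tsum_toReal_eq hterm, ← hlint, ← hint', hmean]
  have heq3 : (fun n : ℕ => ((n : ENNReal) * m n).toReal) = fun n : ℕ => (n : ℝ) * μ n := by
    funext n
    rw [ENNReal.toReal_mul, hμ n]
    simp [hmdef]
  rw [heq3] at hs2 ht2
  exact ht2 ▸ hs2.hasSum

/-- If `X` is an ultra-log-concave random variable with values in the
nonnegative integers (i.e. the sequence `n ↦ n! · P(X = n)` is log-concave: its support is a
discrete interval and the quadratic inequality holds), and the mean `E X` is a nonnegative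
integer `lam`, then `P(X = lam) ≥ e^{-lam} · lam^lam / lam!`, i.e. `P(X = E X)` is at least the
corresponding Poisson probability. -/
theorem ulc_prob_at_mean_ge_poisson
    {Ω : Type*} [MeasureSpace Ω] [IsProbabilityMeasure (volume : Measure Ω)]
    (X : Ω → ℕ) (hX : Measurable X)
    (μ : ℕ → ℝ) (hμ : ∀ n, μ n = ((volume : Measure Ω) (X ⁻¹' {n})).toReal)
    (hsupp : ∀ i j k : ℕ, i ≤ j → j ≤ k → 0 < μ i → 0 < μ k → 0 < μ j)
    (hulc : ∀ n : ℕ, 1 ≤ n →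
      ((n + 1).factorial : ℝ) * μ (n + 1) * (((n - 1).factorial : ℝ) * μ (n - 1)) ≤
        ((n.factorial : ℝ) * μ n) ^ 2)
    (hint : Integrable (fun ω => (X ω : ℝ)) (volume : Measure Ω))
    (lam : ℕ) (hmean : ∫ ω, (X ω : ℝ) ∂(volume : Measure Ω) = (lam : ℝ)) :
    Real.exp (-(lam : ℝ)) * (lam : ℝ) ^ lam / (lam.factorial : ℝ) ≤ μ lam := by
  classical
  have hpnn : ∀ n, 0 ≤ μ n := by
    intro n; rw [hμ n]; exact ENNReal.toReal_nonneg
  obtain ⟨hsum1, hsum2⟩ := ulc_sums X hX μ hμ hint lam hmean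
  rcases Nat.eq_zero_or_pos lam with h0 | hpos
  · -- lam = 0 : X = 0 a.s.
    subst h0
    have hz : ∀ n : ℕ, (n : ℝ) * μ n = 0 := by
      have hnn : ∀ n : ℕ, 0 ≤ (n : ℝ) * μ n := fun n => mul_nonneg (by positivity) (hpnn n)
      have := (hasSum_zero_iff_of_nonneg hnn).1 (by simpa using hsum2)
      intro n; exact congrFun this n
    have hn0 : ∀ n : ℕ, n ≠ 0 → μ n = 0 := by
      intro n hn
      have := hz n
      have hne : ((n : ℝ)) ≠ 0 := by exact_mod_cast hn
      exact (mul_eq_zero.1 this).resolve_left hne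
    have hμ0 : μ 0 = 1 := by
      have h2 : HasSum (fun n : ℕ => if n = 0 then μ 0 else 0) (μ 0) := hasSum_ite_eq 0 (μ 0)
      have heq : (fun n : ℕ => if n = 0 then μ 0 else 0) = μ := by
        funext n
        by_cases hn : n = 0
        · rw [hn]; simp
        · simp [hn, hn0 n hn]
      rw [heq] at h2
      exact h2.unique hsum1
    simp [hμ0]
  · exact ulc_core μ hpnn lam hpos hsum1 hsum2 hsupp hulc
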